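/- Let Γ be a visibility representation of a planar graph G in which each vertex bar splits into a left part (where all edges to lower vertices attach) and a right part (where all edges to higher vertices attach), with all bars at pairwise distinct y-coordinates. Place each vertex point between the two parts of its bar (after doubling the grid) and make all grid points not on bars or edge segments obstacles, with vertex points blocking. Then for any two vertices u, v: there is an xy-monotone grid path from the point of u to the point of v avoiding obstacles and other vertex points if and only if (u,v) ∈ E. -/

import Mathlib

/-- A single grid step in ℤ²: consecutive points differ by 1 in exactly one coordinate. -/
def GridStep (p q : ℤ × ℤ) : Prop := |q.1 - p.1| + |q.2 - p.2| = 1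

/-- A grid path in ℤ²: a nonempty finite sequence of lattice points with unit axis steps. -/
def IsGridPath (l : List (ℤ × ℤ)) : Prop := l ≠ [] ∧ l.Chain' GridStep

/-- Both coordinates weakly nondecreasing along the path. -/
def NondecPath (l : List (ℤ × ℤ)) : Prop := l.Chain' (fun p q => p.1 ≤ q.1 ∧ p.2 ≤ q.2)

/-- xy-monotone: each coordinate is weakly monotone (in some direction) along the path. -/
def XYMono (l : List (ℤ × ℤ)) : Prop :=
  (l.Chain' (fun p q => p.1 ≤ q.1) ∨ l.Chain' (fun p q => q.1 ≤ p.1)) ∧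
  (l.Chain' (fun p q => p.2 ≤ q.2) ∨ l.Chain' (fun p q => q.2 ≤ p.2))

/-- The path contains no obstacle point. -/
def AvoidsObstacles (O : Set (ℤ × ℤ)) (l : List (ℤ × ℤ)) : Prop := ∀ p ∈ l, p ∉ O

/-- The free (non-obstacle) lattice points of the doubled visibility representation of
a planar graph: doubled horizontal bars and doubled vertical edge segments (edges
oriented from the lower to the higher endpoint). -/
def VisFreeP {V : Type*} (Adj : V → V → Prop)
    (bary barlo barhi : V → ℤ) (ec : V → V → ℤ) : Set (ℤ × ℤ) :=
  {p | (∃ v, p.2 = 2 * bary v ∧ 2 * barlo v ≤ p.1 ∧ p.1 ≤ 2 * barhi v) ∨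
       (∃ u v, Adj u v ∧ bary u < bary v ∧ p.1 = 2 * ec u v ∧
          2 * bary u ≤ p.2 ∧ p.2 ≤ 2 * bary v)}

private lemma gridstep_mk (x y x' y' : ℤ)
    (h : (x' = x ∧ (y' = y + 1 ∨ y' = y - 1)) ∨ (y' = y ∧ (x' = x + 1 ∨ x' = x - 1))) :
    GridStep (x, y) (x', y') := by
  show |x' - x| + |y' - y| = 1
  rcases abs_cases (x' - x) with ⟨h1, _⟩ | ⟨h1, _⟩ <;>
    rcases abs_cases (y' - y) with ⟨h2, _⟩ | ⟨h2, _⟩ <;> omega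

private lemma gridstep_cases (p q : ℤ × ℤ) (h : GridStep p q) :
    (q.1 = p.1 ∧ (q.2 = p.2 + 1 ∨ q.2 = p.2 - 1)) ∨
    (q.2 = p.2 ∧ (q.1 = p.1 + 1 ∨ q.1 = p.1 - 1)) := by
  unfold GridStep at h
  rcases abs_cases (q.1 - p.1) with ⟨h1, _⟩ | ⟨h1, _⟩ <;>
    rcases abs_cases (q.2 - p.2) with ⟨h2, _⟩ | ⟨h2, _⟩ <;> omega

private lemma gridstep_symm (p q : ℤ × ℤ) (h : GridStep p q) : GridStep q p := by
  unfold GridStep at *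
  rw [abs_sub_comm p.1 q.1, abs_sub_comm p.2 q.2]
  exact h

private lemma mono_step (g : ℕ → ℤ) (n : ℕ) (h : ∀ i, i + 1 < n → g i ≤ g (i + 1)) :
    ∀ i j, i ≤ j → j < n → g i ≤ g j := by
  intro i j hij hj
  induction j with
  | zero =>
    have : i = 0 := Nat.le_zero.mp hij
    exact le_of_eq (by rw [this])
  | succ j ih =>
    rcases Nat.lt_or_ge i (j + 1) with h1 | h1
    · exact le_trans (ih (Nat.lt_succ_iff.mp h1) (by omega)) (h j hj)
    · have : i = j + 1 := by omega
      exact le_of_eq (by rw [this])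

private lemma int_ivt (g : ℕ → ℤ) :
    ∀ (d lo : ℕ), (∀ i, lo ≤ i → i < lo + d → g (i + 1) ≤ g i + 1 ∧ g i ≤ g (i + 1) + 1) →
    ∀ t : ℤ, ((g lo ≤ t ∧ t ≤ g (lo + d)) ∨ (g (lo + d) ≤ t ∧ t ≤ g lo)) →
    ∃ m, lo ≤ m ∧ m ≤ lo + d ∧ g m = t := by
  intro d
  induction d with
  | zero =>
    intro lo _ t ht
    simp only [Nat.add_zero] at ht
    exact ⟨lo, le_rfl, by omega, by omega⟩
  | succ d ih =>
    intro lo hstep t ht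
    by_cases h0 : g lo = t
    · exact ⟨lo, le_rfl, by omega, h0⟩
    · have hs := hstep lo le_rfl (by omega)
      have he : lo + (d + 1) = (lo + 1) + d := by omega
      rw [he] at ht
      obtain ⟨m, h1, h2, h3⟩ := ih (lo + 1) (fun i hi1 hi2 => hstep i (by omega) (by omega)) t
        (by omega)
      exact ⟨m, by omega, by omega, h3⟩

section Extract

variable {V : Type*} (G : SimpleGraph V) (bary barlo barhi px : V → ℤ)
  (hyinj : Function.Injective bary) (ec : V → V → ℤ)

include hyinj

/-- The key extraction lemma: from a monotone free path (presented as a function) from the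
vertex point of `u` up to the vertex point of `v`, we extract the edge `uv`. -/
private lemma extract
    (hsplit : ∀ v, barlo v ≤ px v ∧ px v ≤ barhi v)
    (hLR : ∀ u v, G.Adj u v → bary u < bary v → ec u v < px v ∧ px u < ec u v)
    (hcoldist : ∀ u v u' v', G.Adj u v → G.Adj u' v' → bary u < bary v →
      bary u' < bary v' → (u, v) ≠ (u', v') → ec u v ≠ ec u' v')
    (hnocross : ∀ u v w, G.Adj u v → bary u < bary v → w ≠ u → w ≠ v →
      bary u < bary w → bary w < bary v → ¬(barlo w ≤ ec u v ∧ ec u v ≤ barhi w))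
    (u v : V) (horder : bary u < bary v)
    (n : ℕ) (f : ℕ → ℤ × ℤ) (hn : 1 ≤ n)
    (hstep : ∀ i, i + 1 < n → GridStep (f i) (f (i + 1)))
    (hymono : ∀ i j, i ≤ j → j < n → (f i).2 ≤ (f j).2)
    (hfree : ∀ i, i < n → f i ∈ VisFreeP G.Adj bary barlo barhi ec)
    (hblock : ∀ i, i < n → ∀ w, w ≠ u → w ≠ v → f i ≠ (2 * px w, 2 * bary w))
    (h0 : f 0 = (2 * px u, 2 * bary u))
    (hlast : f (n - 1) = (2 * px v, 2 * bary v)) :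
    G.Adj u v := by
  have hx0 : (f 0).1 = 2 * px u := by rw [h0]
  have hy0 : (f 0).2 = 2 * bary u := by rw [h0]
  have hxl : (f (n - 1)).1 = 2 * px v := by rw [hlast]
  have hyl : (f (n - 1)).2 = 2 * bary v := by rw [hlast]
  have hstep' : ∀ i, i + 1 < n →
      ((f (i+1)).1 = (f i).1 ∧ ((f (i+1)).2 = (f i).2 + 1 ∨ (f (i+1)).2 = (f i).2 - 1)) ∨
      ((f (i+1)).2 = (f i).2 ∧ ((f (i+1)).1 = (f i).1 + 1 ∨ (f (i+1)).1 = (f i).1 - 1)) :=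
    fun i hi => gridstep_cases _ _ (hstep i hi)
  have hivtx : ∀ (lo hi : ℕ), lo ≤ hi → hi < n → ∀ t : ℤ,
      (((f lo).1 ≤ t ∧ t ≤ (f hi).1) ∨ ((f hi).1 ≤ t ∧ t ≤ (f lo).1)) →
      ∃ m, lo ≤ m ∧ m ≤ hi ∧ (f m).1 = t := by
    intro lo hi hle hn' t ht
    obtain ⟨d, rfl⟩ := Nat.exists_eq_add_of_le hle
    exact int_ivt (fun i => (f i).1) d lo
      (fun i h1 h2 => by
        show (f (i+1)).1 ≤ (f i).1 + 1 ∧ (f i).1 ≤ (f (i+1)).1 + 1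
        rcases hstep' i (by omega) with ⟨h, _⟩ | ⟨_, h⟩ <;> omega) t ht
  have hivty : ∀ (lo hi : ℕ), lo ≤ hi → hi < n → ∀ t : ℤ,
      (((f lo).2 ≤ t ∧ t ≤ (f hi).2) ∨ ((f hi).2 ≤ t ∧ t ≤ (f lo).2)) →
      ∃ m, lo ≤ m ∧ m ≤ hi ∧ (f m).2 = t := by
    intro lo hi hle hn' t ht
    obtain ⟨d, rfl⟩ := Nat.exists_eq_add_of_le hle
    exact int_ivt (fun i => (f i).2) d lo
      (fun i h1 h2 => by
        show (f (i+1)).2 ≤ (f i).2 + 1 ∧ (f i).2 ≤ (f (i+1)).2 + 1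
        rcases hstep' i (by omega) with ⟨_, h⟩ | ⟨h, _⟩ <;> omega) t ht
  -- points at odd rows lie on edge columns
  have hcolat : ∀ i, i < n → ∀ k : ℤ, (f i).2 = 2 * k + 1 →
      ∃ a b, G.Adj a b ∧ bary a < bary b ∧ bary a ≤ k ∧ k < bary b ∧ (f i).1 = 2 * ec a b := by
    intro i hi k hk
    have hf := hfree i hi
    simp only [VisFreeP, Set.mem_setOf_eq] at hf
    rcases hf with ⟨w, hw1, _, _⟩ | ⟨a, b, h1, h2, h3, h4, h5⟩
    · omega
    · exact ⟨a, b, h1, h2, by omega, by omega, h3⟩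
  -- points at odd columns lie on bars
  have hbarat : ∀ i, i < n → ∀ c : ℤ, (f i).1 = 2 * c + 1 →
      ∃ w, (f i).2 = 2 * bary w ∧ 2 * barlo w ≤ 2 * c + 1 ∧ 2 * c + 1 ≤ 2 * barhi w := by
    intro i hi c hc
    have hf := hfree i hi
    simp only [VisFreeP, Set.mem_setOf_eq] at hf
    rcases hf with ⟨w, hw1, hw2, hw3⟩ | ⟨a, b, _, _, h3, _, _⟩
    · exact ⟨w, hw1, by omega, by omega⟩
    · omega
  -- no column spanning rows k,k+1 sits at the split abscissa of a bar at row k or k+1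
  have hnopx : ∀ (w : V) (k : ℤ), (bary w = k ∨ bary w = k + 1) →
      ∀ a b, G.Adj a b → bary a < bary b → bary a ≤ k → k < bary b → ec a b ≠ px w := by
    intro w k hk a b hadj hab ha hb heq
    by_cases haw : a = w
    · subst haw
      have := (hLR a b hadj hab).2
      omega
    · by_cases hbw : b = w
      · subst hbw
        have := (hLR a b hadj hab).1
        omega
      · have h1 : bary a < bary w := lt_of_le_of_ne (by omega) (fun h => haw (hyinj h))
        have h2 : bary w < bary b := lt_of_le_of_ne (by omega) (fun h => hbw (hyinj h).symm)
        exact hnocross a b w hadj hab (fun h => haw h.symm) (fun h => hbw h.symm) h1 h2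
          ⟨by rw [heq]; exact (hsplit w).1, by rw [heq]; exact (hsplit w).2⟩
  -- a column spanning rows k,k+1 inside a bar at row k (resp. k+1) must end there
  have hinbar : ∀ a b w (k : ℤ), G.Adj a b → bary a < bary b → bary a ≤ k → k < bary b →
      barlo w ≤ ec a b → ec a b ≤ barhi w →
      ((bary w = k + 1 → b = w) ∧ (bary w = k → a = w)) := by
    intro a b w k hadj hab ha hb hl hh
    constructor
    · intro hw
      by_contra hbw
      have haw : ¬ a = w := fun h => by rw [h] at ha; omega
      have h2 : bary w < bary b := lt_of_le_of_ne (by omega) (fun h => hbw (hyinj h).symm)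
      exact hnocross a b w hadj hab (fun h => haw h.symm) (fun h => hbw h.symm)
        (by omega) h2 ⟨hl, hh⟩
    · intro hw
      by_contra haw
      have hbw : ¬ b = w := fun h => by rw [h] at hb; omega
      have h1 : bary a < bary w := lt_of_le_of_ne (by omega) (fun h => haw (hyinj h))
      exact hnocross a b w hadj hab (fun h => haw h.symm) (fun h => hbw h.symm)
        h1 (by omega) ⟨hl, hh⟩
  -- the column used just above the bar of u is an edge out of u
  have useA : ∀ i, i < n → (f i).2 = 2 * bary u + 1 → ∀ a b, G.Adj a b → bary a < bary b →
      bary a ≤ bary u → bary u < bary b → (f i).1 = 2 * ec a b → a = u := by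
    intro i hi hy a b hadj hab ha hb hx
    have hnepx : ec a b ≠ px u := hnopx u (bary u) (Or.inl rfl) a b hadj hab ha hb
    obtain ⟨c, hc1, hc2⟩ : ∃ c : ℤ, (2 * c + 1 = 2 * ec a b - 1 ∨ 2 * c + 1 = 2 * ec a b + 1) ∧
        (((f 0).1 ≤ 2 * c + 1 ∧ 2 * c + 1 ≤ (f i).1) ∨
          ((f i).1 ≤ 2 * c + 1 ∧ 2 * c + 1 ≤ (f 0).1)) := by
      rcases lt_or_gt_of_ne hnepx with h | h
      · exact ⟨ec a b, Or.inr (by ring), Or.inr (by omega)⟩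
      · exact ⟨ec a b - 1, Or.inl (by ring), Or.inl (by omega)⟩
    obtain ⟨m, hm0, hmi, hmt⟩ := hivtx 0 i (Nat.zero_le _) hi (2 * c + 1) hc2
    obtain ⟨w, hwy, hwl, hwh⟩ := hbarat m (by omega) c hmt
    have h1 : (f 0).2 ≤ (f m).2 := hymono 0 m hm0 (by omega)
    have h2 : (f m).2 ≤ (f i).2 := hymono m i hmi hi
    have hwu : w = u := hyinj (show bary w = bary u by omega)
    subst hwu
    exact (hinbar a b w (bary w) hadj hab ha hb (by omega) (by omega)).2 rfl
  -- the column used just below the bar of v is an edge into v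
  have useB : ∀ i, i < n → (f i).2 = 2 * bary v - 1 → ∀ a b, G.Adj a b → bary a < bary b →
      bary a ≤ bary v - 1 → bary v - 1 < bary b → (f i).1 = 2 * ec a b → b = v := by
    intro i hi hy a b hadj hab ha hb hx
    have hnepx : ec a b ≠ px v := hnopx v (bary v - 1) (Or.inr (by ring)) a b hadj hab ha hb
    obtain ⟨c, hc1, hc2⟩ : ∃ c : ℤ, (2 * c + 1 = 2 * ec a b - 1 ∨ 2 * c + 1 = 2 * ec a b + 1) ∧
        (((f i).1 ≤ 2 * c + 1 ∧ 2 * c + 1 ≤ (f (n-1)).1) ∨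
          ((f (n-1)).1 ≤ 2 * c + 1 ∧ 2 * c + 1 ≤ (f i).1)) := by
      rcases lt_or_gt_of_ne hnepx with h | h
      · exact ⟨ec a b, Or.inr (by ring), Or.inl (by omega)⟩
      · exact ⟨ec a b - 1, Or.inl (by ring), Or.inr (by omega)⟩
    obtain ⟨m, hm0, hmi, hmt⟩ := hivtx i (n-1) (by omega) (by omega) (2 * c + 1) hc2
    obtain ⟨w, hwy, hwl, hwh⟩ := hbarat m (by omega) c hmt
    have h1 : (f i).2 ≤ (f m).2 := hymono i m hm0 (by omega)
    have h2 : (f m).2 ≤ (f (n-1)).2 := hymono m (n-1) hmi (by omega)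
    have hwv : w = v := hyinj (show bary w = bary v by omega)
    subst hwv
    exact (hinbar a b w (bary w - 1) hadj hab ha hb (by omega) (by omega)).1 (by ring)
  -- consecutive odd rows use the same edge column
  have useC : ∀ (k : ℤ) (i j : ℕ) (a b a' b' : V), bary u ≤ k → k + 1 < bary v →
      i < n → j < n → (f i).2 = 2 * k + 1 → (f j).2 = 2 * k + 3 →
      G.Adj a b → bary a < bary b → bary a ≤ k → k < bary b → (f i).1 = 2 * ec a b →
      G.Adj a' b' → bary a' < bary b' → bary a' ≤ k + 1 → k + 1 < bary b' →
      (f j).1 = 2 * ec a' b' → a = a' ∧ b = b' := by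
    intro k i j a b a' b' hku hkv hi hj hyi hyj hadj hab ha hb hxi hadj' hab' ha' hb' hxj
    have hij : i ≤ j := by
      by_contra h
      have := hymono j i (by omega) hi
      omega
    by_cases hxe : ec a b = ec a' b'
    · have hpair : (a, b) = (a', b') := by
        by_contra hne
        exact hcoldist a b a' b' hadj hadj' hab hab' hne hxe
      rw [Prod.mk.injEq] at hpair
      exact hpair
    · exfalso
      -- find the bar w at row 2k+2 from the i-side
      obtain ⟨c, hc1, hc2⟩ : ∃ c : ℤ,
          (2 * c + 1 = 2 * ec a b - 1 ∨ 2 * c + 1 = 2 * ec a b + 1) ∧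
          (((f i).1 ≤ 2 * c + 1 ∧ 2 * c + 1 ≤ (f j).1) ∨
            ((f j).1 ≤ 2 * c + 1 ∧ 2 * c + 1 ≤ (f i).1)) := by
        rcases lt_or_gt_of_ne hxe with h | h
        · exact ⟨ec a b, Or.inr (by ring), Or.inl (by omega)⟩
        · exact ⟨ec a b - 1, Or.inl (by ring), Or.inr (by omega)⟩
      obtain ⟨m1, hm1i, hm1j, hm1t⟩ := hivtx i j hij hj (2 * c + 1) hc2
      obtain ⟨w, hwy, hwl, hwh⟩ := hbarat m1 (by omega) c hm1t
      have hw1 : (f i).2 ≤ (f m1).2 := hymono i m1 hm1i (by omega)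
      have hw2 : (f m1).2 ≤ (f j).2 := hymono m1 j hm1j hj
      have hwk : bary w = k + 1 := by omega
      have hbweq : b = w := (hinbar a b w k hadj hab ha hb (by omega) (by omega)).1 hwk
      -- same from the j-side
      obtain ⟨c', hc1', hc2'⟩ : ∃ c' : ℤ,
          (2 * c' + 1 = 2 * ec a' b' - 1 ∨ 2 * c' + 1 = 2 * ec a' b' + 1) ∧
          (((f i).1 ≤ 2 * c' + 1 ∧ 2 * c' + 1 ≤ (f j).1) ∨
            ((f j).1 ≤ 2 * c' + 1 ∧ 2 * c' + 1 ≤ (f i).1)) := by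
        rcases lt_or_gt_of_ne hxe with h | h
        · exact ⟨ec a' b' - 1, Or.inl (by ring), Or.inl (by omega)⟩
        · exact ⟨ec a' b', Or.inr (by ring), Or.inr (by omega)⟩
      obtain ⟨m2, hm2i, hm2j, hm2t⟩ := hivtx i j hij hj (2 * c' + 1) hc2'
      obtain ⟨w', hwy', hwl', hwh'⟩ := hbarat m2 (by omega) c' hm2t
      have hw1' : (f i).2 ≤ (f m2).2 := hymono i m2 hm2i (by omega)
      have hw2' : (f m2).2 ≤ (f j).2 := hymono m2 j hm2j hj
      have hww : w' = w := hyinj (show bary w' = bary w by omega)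
      have haweq : a' = w := by
        rw [← hww]
        exact (hinbar a' b' w' (k+1) hadj' hab' ha' hb' (by omega) (by omega)).2
          (by rw [hww]; exact hwk)
      -- now the vertex point of the bar w is on the path: contradiction
      have hp1 : ec a b < px w := by rw [← hbweq]; exact (hLR a b hadj hab).1
      have hp2 : px w < ec a' b' := by rw [← haweq]; exact (hLR a' b' hadj' hab').2
      obtain ⟨m3, hm3i, hm3j, hm3t⟩ := hivtx i j hij hj (2 * px w)
        (Or.inl ⟨by omega, by omega⟩)
      have hw3 : (f i).2 ≤ (f m3).2 := hymono i m3 hm3i (by omega)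
      have hw4 : (f m3).2 ≤ (f j).2 := hymono m3 j hm3j hj
      rcases (show (f m3).2 = 2 * k + 1 ∨ (f m3).2 = 2 * k + 2 ∨ (f m3).2 = 2 * k + 3
        by omega) with hy3 | hy3 | hy3
      · obtain ⟨A, B, hA1, hA2, hA3, hA4, hA5⟩ := hcolat m3 (by omega) k hy3
        exact hnopx w k (Or.inr hwk) A B hA1 hA2 hA3 hA4 (by omega)
      · have hne1 : w ≠ u := fun h => by rw [h] at hwk; omega
        have hne2 : w ≠ v := fun h => by rw [h] at hwk; omega
        apply hblock m3 (by omega) w hne1 hne2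
        rw [Prod.ext_iff]
        exact ⟨hm3t, by omega⟩
      · obtain ⟨A, B, hA1, hA2, hA3, hA4, hA5⟩ := hcolat m3 (by omega) (k+1) (by omega)
        exact hnopx w (k+1) (Or.inl hwk) A B hA1 hA2 hA3 hA4 (by omega)
  -- existence of points at each odd row
  have hyodd : ∀ k : ℤ, bary u ≤ k → k < bary v → ∃ i, i < n ∧ (f i).2 = 2 * k + 1 := by
    intro k h1 h2
    obtain ⟨m, _, hm2, hm3⟩ := hivty 0 (n-1) (by omega) (by omega) (2 * k + 1)
      (Or.inl ⟨by omega, by omega⟩)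
    exact ⟨m, by omega, hm3⟩
  -- main induction up the rows
  have key : ∀ d : ℕ, bary u + d < bary v → ∃ i b, i < n ∧ (f i).2 = 2 * (bary u + d) + 1 ∧
      G.Adj u b ∧ bary u < bary b ∧ bary u + d < bary b ∧ (f i).1 = 2 * ec u b := by
    intro d
    induction d with
    | zero =>
      intro hd
      obtain ⟨i, hi, hyi⟩ := hyodd (bary u) le_rfl (by push_cast at hd; omega)
      obtain ⟨a, b, h1, h2, h3, h4, h5⟩ := hcolat i hi (bary u) hyi
      have hau := useA i hi hyi a b h1 h2 h3 h4 h5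
      subst hau
      exact ⟨i, b, hi, by push_cast; omega, h1, h4, by push_cast; omega, h5⟩
    | succ d ih =>
      intro hd
      push_cast at hd
      obtain ⟨i, b, hi, hyi, hadj, hub, hdb, hxi⟩ := ih (by push_cast; omega)
      push_cast at hyi hdb
      obtain ⟨j, hj, hyj⟩ := hyodd (bary u + d + 1) (by omega) (by omega)
      obtain ⟨a', b', h1, h2, h3, h4, h5⟩ := hcolat j hj (bary u + d + 1) hyj
      obtain ⟨he1, he2⟩ := useC (bary u + d) i j u b a' b' (by omega) (by omega)
        hi hj (by omega) (by omega) hadj hub (by omega) (by omega) hxi h1 h2 h3 h4 h5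
      subst he1
      exact ⟨j, b', hj, by push_cast; omega, h1, by omega, by push_cast; omega, h5⟩
  obtain ⟨d, hd⟩ : ∃ d : ℕ, (d : ℤ) = bary v - 1 - bary u :=
    ⟨(bary v - 1 - bary u).toNat, by omega⟩
  obtain ⟨i, b, hi, hyi, hadj, hub, hdb, hxi⟩ := key d (by omega)
  have hbv : b = v := useB i hi (by omega) u b hadj hub (by omega) (by omega) hxi
  rwa [hbv] at hadj

/-- Construction of the canonical monotone path along an edge (going up). -/
private lemma construct
    (hsplit : ∀ v, barlo v ≤ px v ∧ px v ≤ barhi v)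
    (hattach : ∀ u v, G.Adj u v → bary u < bary v →
      (barlo u ≤ ec u v ∧ ec u v ≤ barhi u) ∧ (barlo v ≤ ec u v ∧ ec u v ≤ barhi v))
    (hLR : ∀ u v, G.Adj u v → bary u < bary v → ec u v < px v ∧ px u < ec u v)
    (hnocross : ∀ u v w, G.Adj u v → bary u < bary v → w ≠ u → w ≠ v →
      bary u < bary w → bary w < bary v → ¬(barlo w ≤ ec u v ∧ ec u v ≤ barhi w))
    (u v : V) (hadj : G.Adj u v) (horder : bary u < bary v) :
    ∃ l : List (ℤ × ℤ), IsGridPath l ∧ NondecPath l ∧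
      (∀ p ∈ l, p ∈ VisFreeP G.Adj bary barlo barhi ec) ∧
      (∀ w, w ≠ u → w ≠ v → (2 * px w, 2 * bary w) ∉ l) ∧
      l.head? = some (2 * px u, 2 * bary u) ∧
      l.getLast? = some (2 * px v, 2 * bary v) := by
  obtain ⟨hEC1, hEC2⟩ := hLR u v hadj horder
  obtain ⟨⟨hA1, hA2⟩, hA3, hA4⟩ := hattach u v hadj horder
  obtain ⟨N, hN⟩ : ∃ N : ℕ,
      (N : ℤ) = 2*(ec u v - px u) + 2*(bary v - bary u) + 2*(px v - ec u v) :=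
    ⟨(2*(ec u v - px u) + 2*(bary v - bary u) + 2*(px v - ec u v)).toNat,
      Int.toNat_of_nonneg (by omega)⟩
  set f : ℕ → ℤ × ℤ := fun i =>
    if (i : ℤ) ≤ 2*(ec u v - px u) then (2*px u + i, 2*bary u)
    else if (i : ℤ) ≤ 2*(ec u v - px u) + 2*(bary v - bary u) then
      (2*ec u v, 2*bary u + ((i : ℤ) - 2*(ec u v - px u)))
    else (2*ec u v + ((i : ℤ) - 2*(ec u v - px u) - 2*(bary v - bary u)), 2*bary v)
    with hfdef
  have hf1 : ∀ i : ℕ, (i : ℤ) ≤ 2*(ec u v - px u) → f i = (2*px u + i, 2*bary u) := by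
    intro i h
    simp only [hfdef]
    rw [if_pos h]
  have hf2 : ∀ i : ℕ, 2*(ec u v - px u) < (i : ℤ) →
      (i : ℤ) ≤ 2*(ec u v - px u) + 2*(bary v - bary u) →
      f i = (2*ec u v, 2*bary u + ((i : ℤ) - 2*(ec u v - px u))) := by
    intro i h1 h2
    simp only [hfdef]
    rw [if_neg (by omega), if_pos h2]
  have hf3 : ∀ i : ℕ, 2*(ec u v - px u) + 2*(bary v - bary u) < (i : ℤ) →
      f i = (2*ec u v + ((i : ℤ) - 2*(ec u v - px u) - 2*(bary v - bary u)), 2*bary v) := by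
    intro i h1
    simp only [hfdef]
    rw [if_neg (by omega), if_neg (by omega)]
  refine ⟨(List.range (N+1)).map f, ⟨by simp, ?_⟩, ?_, ?_, ?_, ?_, ?_⟩
  · -- grid path
    rw [List.Chain', List.isChain_map, List.isChain_range_succ]
    intro m hm
    by_cases c1 : ((m+1 : ℕ) : ℤ) ≤ 2*(ec u v - px u)
    · rw [hf1 m (by push_cast at c1 ⊢; omega), hf1 (m+1) c1]
      apply gridstep_mk
      push_cast
      omega
    · by_cases c2 : ((m+1 : ℕ) : ℤ) ≤ 2*(ec u v - px u) + 2*(bary v - bary u)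
      · by_cases c3 : (m : ℤ) ≤ 2*(ec u v - px u)
        · rw [hf1 m c3, hf2 (m+1) (by push_cast at c1 ⊢; omega) c2]
          apply gridstep_mk
          push_cast at c1 c2 c3 ⊢
          omega
        · rw [hf2 m (by omega) (by push_cast at c2 ⊢; omega), hf2 (m+1) (by push_cast; omega) c2]
          apply gridstep_mk
          push_cast at c1 c2 c3 ⊢
          omega
      · by_cases c3 : (m : ℤ) ≤ 2*(ec u v - px u) + 2*(bary v - bary u)
        · rw [hf2 m (by push_cast at c2 ⊢; omega) c3, hf3 (m+1) (by push_cast at c2 ⊢; omega)]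
          apply gridstep_mk
          push_cast at c1 c2 c3 ⊢
          omega
        · rw [hf3 m (by omega), hf3 (m+1) (by push_cast at c2 ⊢; omega)]
          apply gridstep_mk
          push_cast at c1 c2 c3 ⊢
          omega
  · -- nondecreasing
    unfold NondecPath
    rw [List.Chain', List.isChain_map, List.isChain_range_succ]
    intro m hm
    by_cases c1 : ((m+1 : ℕ) : ℤ) ≤ 2*(ec u v - px u)
    · rw [hf1 m (by push_cast at c1 ⊢; omega), hf1 (m+1) c1]
      constructor <;> (dsimp only; push_cast; omega)
    · by_cases c2 : ((m+1 : ℕ) : ℤ) ≤ 2*(ec u v - px u) + 2*(bary v - bary u)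
      · by_cases c3 : (m : ℤ) ≤ 2*(ec u v - px u)
        · rw [hf1 m c3, hf2 (m+1) (by push_cast at c1 ⊢; omega) c2]
          constructor <;> (dsimp only; push_cast at c1 c2 c3 ⊢; omega)
        · rw [hf2 m (by omega) (by push_cast at c2 ⊢; omega), hf2 (m+1) (by push_cast; omega) c2]
          constructor <;> (dsimp only; push_cast at c1 c2 c3 ⊢; omega)
      · by_cases c3 : (m : ℤ) ≤ 2*(ec u v - px u) + 2*(bary v - bary u)
        · rw [hf2 m (by push_cast at c2 ⊢; omega) c3, hf3 (m+1) (by push_cast at c2 ⊢; omega)]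
          constructor <;> (dsimp only; push_cast at c1 c2 c3 ⊢; omega)
        · rw [hf3 m (by omega), hf3 (m+1) (by push_cast at c2 ⊢; omega)]
          constructor <;> (dsimp only; push_cast at c1 c2 c3 ⊢; omega)
  · -- free points
    intro p hp
    rw [List.mem_map] at hp
    obtain ⟨m, hm, rfl⟩ := hp
    rw [List.mem_range] at hm
    have hmN : (m : ℤ) ≤ (N : ℤ) := by exact_mod_cast Nat.lt_succ_iff.mp hm
    simp only [VisFreeP, Set.mem_setOf_eq]
    by_cases c1 : (m : ℤ) ≤ 2*(ec u v - px u)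
    · rw [hf1 m c1]
      left
      refine ⟨u, rfl, ?_, ?_⟩ <;> (dsimp only; have := (hsplit u).1; omega)
    · by_cases c2 : (m : ℤ) ≤ 2*(ec u v - px u) + 2*(bary v - bary u)
      · rw [hf2 m (by omega) c2]
        right
        exact ⟨u, v, hadj, horder, rfl, by dsimp only; omega, by dsimp only; omega⟩
      · rw [hf3 m (by omega)]
        left
        refine ⟨v, rfl, ?_, ?_⟩ <;> (dsimp only; have := (hsplit v).2; omega)
  · -- blocked vertex points avoided
    intro w hwu hwv hmem
    rw [List.mem_map] at hmem
    obtain ⟨m, hm, hfm⟩ := hmem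
    rw [List.mem_range] at hm
    have hmN : (m : ℤ) ≤ (N : ℤ) := by exact_mod_cast Nat.lt_succ_iff.mp hm
    by_cases c1 : (m : ℤ) ≤ 2*(ec u v - px u)
    · rw [hf1 m c1, Prod.mk.injEq] at hfm
      exact hwu (hyinj (show bary w = bary u by omega))
    · by_cases c2 : (m : ℤ) ≤ 2*(ec u v - px u) + 2*(bary v - bary u)
      · rw [hf2 m (by omega) c2, Prod.mk.injEq] at hfm
        obtain ⟨hx, hy⟩ := hfm
        have hbw1 : bary u < bary w := by omega
        have hbw2 : bary w ≤ bary v := by omega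
        rcases eq_or_lt_of_le hbw2 with he | hlt
        · exact hwv (hyinj he)
        · exact hnocross u v w hadj horder hwu hwv hbw1 hlt
            ⟨by have := (hsplit w).1; omega, by have := (hsplit w).2; omega⟩
      · rw [hf3 m (by omega), Prod.mk.injEq] at hfm
        exact hwv (hyinj (show bary w = bary v by omega))
  · -- head
    rw [List.head?_map, List.range_succ_eq_map]
    show some (f 0) = _
    rw [hf1 0 (by push_cast; omega)]
    norm_num
  · -- last
    rw [List.range_succ, List.map_append, List.map_cons, List.map_nil]
    rw [List.getLast?_concat]
    have : f N = (2 * px v, 2 * bary v) := by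
      rw [hf3 N (by omega), Prod.mk.injEq]
      constructor <;> omega
    rw [this]

end Extract

/-- Given a visibility representation of a planar graph G in which each bar splits at
the vertex point into a left part (receiving all edges to lower vertices) and a right
part (receiving all edges to higher vertices), with bars at pairwise distinct rows,
doubling the grid and making all points off the drawing obstacles (with vertex points
blocking) yields a grid-obstacle representation: u,v are adjacent iff some xy-monotone
grid path avoiding obstacles and all other vertex points joins their vertex points. -/
theorem planar_visibility_gives_obstacle_rep {V : Type*} [Fintype V]
    (G : SimpleGraph V)
    (bary barlo barhi px : V → ℤ) (hbar : ∀ v, barlo v ≤ barhi v)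
    (hyinj : Function.Injective bary)
    (ec : V → V → ℤ) (hecsymm : ∀ u v, ec u v = ec v u)
    -- the split point of each bar lies on the bar
    (hsplit : ∀ v, barlo v ≤ px v ∧ px v ≤ barhi v)
    -- edge columns attach inside both bars
    (hattach : ∀ u v, G.Adj u v → bary u < bary v →
      (barlo u ≤ ec u v ∧ ec u v ≤ barhi u) ∧ (barlo v ≤ ec u v ∧ ec u v ≤ barhi v))
    -- downward edges attach on the left part, upward edges on the right part
    (hLR : ∀ u v, G.Adj u v → bary u < bary v → ec u v < px v ∧ px u < ec u v)
    -- distinct edges use distinct columns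
    (hcoldist : ∀ u v u' v', G.Adj u v → G.Adj u' v' → bary u < bary v →
      bary u' < bary v' → (u, v) ≠ (u', v') → ec u v ≠ ec u' v')
    -- edge segments do not cross bars of other vertices
    (hnocross : ∀ u v w, G.Adj u v → bary u < bary v → w ≠ u → w ≠ v →
      bary u < bary w → bary w < bary v → ¬(barlo w ≤ ec u v ∧ ec u v ≤ barhi w)) :
    ∀ u v, u ≠ v → (G.Adj u v ↔
      ∃ l : List (ℤ × ℤ), IsGridPath l ∧ XYMono l ∧
        (∀ p ∈ l, p ∈ VisFreeP G.Adj bary barlo barhi ec) ∧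
        (∀ w, w ≠ u → w ≠ v → (2 * px w, 2 * bary w) ∉ l) ∧
        l.head? = some (2 * px u, 2 * bary u) ∧
        l.getLast? = some (2 * px v, 2 * bary v)) := by
  intro u v huv
  have hbne : bary u ≠ bary v := fun h => huv (hyinj h)
  constructor
  · intro hadj
    rcases hbne.lt_or_gt with h | h
    · obtain ⟨l, ⟨hne, hch⟩, hnd, hfree, hblk, hh, hl⟩ :=
        construct G bary barlo barhi px hyinj ec hsplit hattach hLR hnocross u v hadj h
      exact ⟨l, ⟨hne, hch⟩,
        ⟨Or.inl (hnd.imp fun a b hab => hab.1), Or.inl (hnd.imp fun a b hab => hab.2)⟩,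
        hfree, hblk, hh, hl⟩
    · obtain ⟨l, ⟨hne, hch⟩, hnd, hfree, hblk, hh, hl⟩ :=
        construct G bary barlo barhi px hyinj ec hsplit hattach hLR hnocross v u hadj.symm h
      refine ⟨l.reverse, ⟨by simpa using hne, ?_⟩, ⟨Or.inr ?_, Or.inr ?_⟩, ?_, ?_, ?_, ?_⟩
      · rw [List.Chain', List.isChain_reverse]
        exact hch.imp (fun a b hab => gridstep_symm a b hab)
      · rw [List.Chain', List.isChain_reverse]
        exact hnd.imp (fun a b hab => hab.1)
      · rw [List.Chain', List.isChain_reverse]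
        exact hnd.imp (fun a b hab => hab.2)
      · intro p hp
        exact hfree p (List.mem_reverse.mp hp)
      · intro w hw1 hw2 hp
        exact hblk w hw2 hw1 (List.mem_reverse.mp hp)
      · rw [List.head?_reverse]
        exact hl
      · rw [List.getLast?_reverse]
        exact hh
  · rintro ⟨l, ⟨hne, hch⟩, ⟨hx, hy⟩, hfree, hblk, hh, hl⟩
    set n := l.length with hnn
    have hn : 1 ≤ n := List.length_pos_iff.mpr hne
    set f : ℕ → ℤ × ℤ := fun i => l.getD i (0, 0) with hfdef
    have hfi : ∀ i, (h : i < n) → f i = l[i] := fun i h => List.getD_eq_getElem l (0, 0) h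
    have hmem : ∀ i, i < n → f i ∈ l := fun i h => by
      rw [hfi i h]; exact List.getElem_mem _
    have hf0 : f 0 = (2 * px u, 2 * bary u) := by
      have h2 : l[0]? = some (l[0]'(by omega)) := List.getElem?_eq_getElem (by omega)
      rw [← List.head?_eq_getElem?, hh] at h2
      rw [hfi 0 (by omega)]
      exact (Option.some_inj.mp h2).symm
    have hflast : f (n - 1) = (2 * px v, 2 * bary v) := by
      have h2 : l[n-1]? = some (l[n-1]'(by omega)) := List.getElem?_eq_getElem (by omega)
      rw [← List.getLast?_eq_getElem?, hl] at h2
      rw [hfi (n-1) (by omega)]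
      exact (Option.some_inj.mp h2).symm
    have hstep2 : ∀ (R : ℤ × ℤ → ℤ × ℤ → Prop), l.Chain' R →
        ∀ i, i + 1 < n → R (f i) (f (i + 1)) := by
      intro R hR i h
      have := List.isChain_iff_getElem.mp hR i (by omega)
      rwa [← hfi i (by omega), ← hfi (i+1) h] at this
    have hstepG : ∀ i, i + 1 < n → GridStep (f i) (f (i + 1)) := hstep2 _ hch
    have hfree' : ∀ i, i < n → f i ∈ VisFreeP G.Adj bary barlo barhi ec :=
      fun i h => hfree _ (hmem i h)
    rcases hbne.lt_or_gt with hlt | hlt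
    · -- bary u < bary v : the path is y-nondecreasing
      have hymono : ∀ i j, i ≤ j → j < n → (f i).2 ≤ (f j).2 := by
        rcases hy with hy | hy
        · intro i j hij hj
          have hm : (f i).2 ≤ (f j).2 := mono_step (fun i => (f i).2) n
            (fun i h => hstep2 _ hy i h) i j hij hj
          exact hm
        · exfalso
          have hm : -(f 0).2 ≤ -(f (n-1)).2 := mono_step (fun i => -(f i).2) n
            (fun i h => by
              show -(f i).2 ≤ -(f (i+1)).2
              have h2 : (f (i+1)).2 ≤ (f i).2 := hstep2 _ hy i h
              omega) 0 (n-1) (by omega) (by omega)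
          have e0 : (f 0).2 = 2 * bary u := by rw [hf0]
          have e1 : (f (n-1)).2 = 2 * bary v := by rw [hflast]
          omega
      have hblock' : ∀ i, i < n → ∀ w, w ≠ u → w ≠ v → f i ≠ (2 * px w, 2 * bary w) :=
        fun i hi w hw1 hw2 heq => hblk w hw1 hw2 (heq ▸ hmem i hi)
      exact extract G bary barlo barhi px hyinj ec hsplit hLR hcoldist hnocross u v hlt
        n f hn hstepG hymono hfree' hblock' hf0 hflast
    · -- bary v < bary u : reverse the path (as a function)
      set g : ℕ → ℤ × ℤ := fun i => f (n - 1 - i) with hgdef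
      have hg0 : g 0 = (2 * px v, 2 * bary v) := by
        show f (n - 1 - 0) = _
        rw [Nat.sub_zero]
        exact hflast
      have hglast : g (n - 1) = (2 * px u, 2 * bary u) := by
        show f (n - 1 - (n - 1)) = _
        rw [Nat.sub_self]
        exact hf0
      have hgstep : ∀ i, i + 1 < n → GridStep (g i) (g (i + 1)) := by
        intro i h
        show GridStep (f (n - 1 - i)) (f (n - 1 - (i + 1)))
        have e1 : n - 1 - i = (n - 1 - (i + 1)) + 1 := by omega
        have := hstepG (n - 1 - (i + 1)) (by omega)
        rw [← e1] at this
        exact gridstep_symm _ _ this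
      have hgmono : ∀ i j, i ≤ j → j < n → (g i).2 ≤ (g j).2 := by
        have hymono : ∀ i j, i ≤ j → j < n → (f j).2 ≤ (f i).2 := by
          rcases hy with hy | hy
          · exfalso
            have hm : (f 0).2 ≤ (f (n-1)).2 := mono_step (fun i => (f i).2) n
              (fun i h => hstep2 _ hy i h) 0 (n-1) (by omega) (by omega)
            have e0 : (f 0).2 = 2 * bary u := by rw [hf0]
            have e1 : (f (n-1)).2 = 2 * bary v := by rw [hflast]
            omega
          · intro i j hij hj
            have hm : -(f i).2 ≤ -(f j).2 := mono_step (fun i => -(f i).2) n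
              (fun i h => by
                show -(f i).2 ≤ -(f (i+1)).2
                have h2 : (f (i+1)).2 ≤ (f i).2 := hstep2 _ hy i h
                omega) i j hij hj
            omega
        intro i j hij hj
        exact hymono (n - 1 - j) (n - 1 - i) (by omega) (by omega)
      have hgfree : ∀ i, i < n → g i ∈ VisFreeP G.Adj bary barlo barhi ec :=
        fun i h => hfree' (n - 1 - i) (by omega)
      have hgblock : ∀ i, i < n → ∀ w, w ≠ v → w ≠ u → g i ≠ (2 * px w, 2 * bary w) :=
        fun i hi w hw1 hw2 heq => hblk w hw2 hw1 (heq ▸ hmem (n - 1 - i) (by omega))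
      exact (extract G bary barlo barhi px hyinj ec hsplit hLR hcoldist hnocross v u hlt
        n g hn hgstep hgmono hgfree hgblock hg0 hglast).symm
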